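/- Let B⁽⁺¹⁾_{ℓ,m} denote the number of Motzkin paths from 0 to +1 with exactly ℓ steps equal to 0 and m steps equal to −1, B_{ℓ,m} the number of Motzkin bridges with ℓ steps 0 and m steps −1, and E_{ℓ,m} the number of Motzkin excursions with ℓ steps 0 and m steps −1. Then for all nonnegative integers ℓ and m: B⁽⁺¹⁾_{ℓ,m} = Σ E_{ℓ₁,m₁}·B_{ℓ₂,m₂}, where the sum ranges over all ℓ₁ + ℓ₂ = ℓ and m₁ + m₂ = m. Equivalently, B⁽⁺¹⁾ = E·B as formal power series in t and u. -/

import Mathlib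

/-- A Motzkin walk: a finite sequence of steps from `{+1, 0, −1}`. -/
def IsMotzkinWalk (w : List ℤ) : Prop := ∀ s ∈ w, s = 1 ∨ s = 0 ∨ s = -1

/-- `bridgeCount ℓ m` is the number of Motzkin bridges (walks with total sum `0`)
with exactly `ℓ` steps equal to `0` and `m` steps equal to `−1`. -/
noncomputable def bridgeCount (ℓ m : ℕ) : ℕ :=
  Nat.card {w : List ℤ // IsMotzkinWalk w ∧ w.sum = 0 ∧
    w.count 0 = ℓ ∧ w.count (-1) = m}

/-- `excursionCount ℓ m` is the number of Motzkin excursions (bridges all of whose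
partial sums are nonnegative) with exactly `ℓ` steps `0` and `m` steps `−1`. -/
noncomputable def excursionCount (ℓ m : ℕ) : ℕ :=
  Nat.card {w : List ℤ // IsMotzkinWalk w ∧ w.sum = 0 ∧
    (∀ p : List ℤ, p <+: w → 0 ≤ p.sum) ∧ w.count 0 = ℓ ∧ w.count (-1) = m}

/-- `pathPlusCount ℓ m` is the number of Motzkin paths from `0` to `+1` (walks with total
sum `+1`) with exactly `ℓ` steps `0` and `m` steps `−1`. -/
noncomputable def pathPlusCount (ℓ m : ℕ) : ℕ :=
  Nat.card {w : List ℤ // IsMotzkinWalk w ∧ w.sum = 1 ∧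
    w.count 0 = ℓ ∧ w.count (-1) = m}

/-- `barBridgeCount ℓ m` is the number of Motzkin bridges whose first step is `0` or `−1`,
with exactly `ℓ` steps `0` and `m` steps `−1`. -/
noncomputable def barBridgeCount (ℓ m : ℕ) : ℕ :=
  Nat.card {w : List ℤ // IsMotzkinWalk w ∧ w.sum = 0 ∧
    (w.head? = some 0 ∨ w.head? = some (-1)) ∧ w.count 0 = ℓ ∧ w.count (-1) = m}

namespace MotzkinAux

lemma walk_length {w : List ℤ} (hw : IsMotzkinWalk w) :
    w.length = w.count 1 + w.count 0 + w.count (-1) := by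
  induction w with
  | nil => simp
  | cons s t ih =>
    have hs := hw s (by simp)
    have ht : IsMotzkinWalk t := fun x hx => hw x (List.mem_cons_of_mem _ hx)
    have := ih ht
    rcases hs with rfl | rfl | rfl <;>
      simp [List.count_cons, this] <;> omega

lemma walk_sum {w : List ℤ} (hw : IsMotzkinWalk w) :
    w.sum = (w.count 1 : ℤ) - (w.count (-1) : ℤ) := by
  induction w with
  | nil => simp
  | cons s t ih =>
    have hs := hw s (by simp)
    have ht : IsMotzkinWalk t := fun x hx => hw x (List.mem_cons_of_mem _ hx)
    have := ih ht
    rcases hs with rfl | rfl | rfl <;>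
      simp [List.count_cons, this] <;> omega

lemma finite_walks (n : ℕ) : {w : List ℤ | IsMotzkinWalk w ∧ w.length = n}.Finite := by
  haveI : Finite ({1, 0, -1} : Set ℤ) := (Set.toFinite _).to_subtype
  have hsub : {w : List ℤ | IsMotzkinWalk w ∧ w.length = n} ⊆
      (fun l : List ({1, 0, -1} : Set ℤ) => l.map Subtype.val) ''
        {l : List ({1, 0, -1} : Set ℤ) | l.length = n} := by
    rintro w ⟨hw, hl⟩
    refine ⟨w.attach.map (fun x => ⟨x.1, by
      rcases hw x.1 x.2 with h | h | h <;> simp [h]⟩), by simpa using hl, by simp⟩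
  exact ((List.finite_length_eq _ n).image _).subset hsub

lemma finite_pred {P : List ℤ → Prop} {n : ℕ}
    (h : ∀ w, P w → IsMotzkinWalk w ∧ w.length = n) :
    Finite {w : List ℤ // P w} := by
  have : {w : List ℤ | P w}.Finite :=
    (finite_walks n).subset (fun w hw => h w hw)
  exact this.to_subtype

lemma length_of_sum {w : List ℤ} (hw : IsMotzkinWalk w) {ℓ m : ℕ} {s : ℤ}
    (hsum : w.sum = s) (h0 : w.count 0 = ℓ) (h1 : w.count (-1) = m) :
    w.length = (s + m).toNat + ℓ + m := by
  have hs := walk_sum hw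
  have hl := walk_length hw
  have : (w.count 1 : ℤ) = s + m := by rw [hsum, h1] at hs; omega
  have : w.count 1 = (s + m).toNat := by omega
  omega

instance finB (ℓ m : ℕ) : Finite {w : List ℤ // IsMotzkinWalk w ∧ w.sum = 0 ∧
    w.count 0 = ℓ ∧ w.count (-1) = m} := by
  refine finite_pred (n := m + ℓ + m) ?_
  rintro w ⟨hw, hs, h0, h1⟩
  exact ⟨hw, by simpa using length_of_sum hw hs h0 h1⟩

instance finE (ℓ m : ℕ) : Finite {w : List ℤ // IsMotzkinWalk w ∧ w.sum = 0 ∧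
    (∀ p : List ℤ, p <+: w → 0 ≤ p.sum) ∧ w.count 0 = ℓ ∧ w.count (-1) = m} := by
  refine finite_pred (n := m + ℓ + m) ?_
  rintro w ⟨hw, hs, _, h0, h1⟩
  exact ⟨hw, by simpa using length_of_sum hw hs h0 h1⟩

instance finP (ℓ m : ℕ) : Finite {w : List ℤ // IsMotzkinWalk w ∧ w.sum = 1 ∧
    w.count 0 = ℓ ∧ w.count (-1) = m} := by
  refine finite_pred (n := (1 + m) + ℓ + m) ?_
  rintro w ⟨hw, hs, h0, h1⟩
  refine ⟨hw, ?_⟩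
  have := length_of_sum hw hs h0 h1
  omega

lemma prefix_concat_cases {p c : List ℤ} {x : ℤ} (h : p <+: c ++ [x]) :
    p <+: c ∨ p = c ++ [x] := by
  rcases Nat.lt_or_ge p.length (c ++ [x]).length with hl | hl
  · left
    refine List.prefix_of_prefix_length_le h (c.prefix_append [x]) ?_
    simp at hl ⊢; omega
  · right
    exact List.IsPrefix.eq_of_length h (le_antisymm h.length_le hl)

/-- Existence of the decomposition `w = a ++ 1 :: c` at the last visit to `0`. -/
lemma exists_decomp {w : List ℤ} (hw : IsMotzkinWalk w) (h1 : 1 ≤ w.sum) :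
    ∃ a c : List ℤ, w = a ++ 1 :: c ∧ a.sum = 0 ∧ ∀ p : List ℤ, p <+: c → 0 ≤ p.sum := by
  induction w using List.reverseRecOn with
  | nil => simp at h1
  | append_singleton t s ih =>
    have ht : IsMotzkinWalk t := fun x hx => hw x (by simp [hx])
    have hs := hw s (by simp)
    rw [List.sum_append, List.sum_cons, List.sum_nil, add_zero] at h1
    rcases hs with rfl | rfl | rfl
    · -- s = 1
      have hts : 0 ≤ t.sum := by omega
      rcases eq_or_lt_of_le hts with heq | hlt
      · exact ⟨t, [], by simp, heq.symm, by intro p hp; simp at hp; simp [hp]⟩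
      · obtain ⟨a, c, heq, ha, hc⟩ := ih ht hlt
        refine ⟨a, c ++ [1], by simp [heq], ha, ?_⟩
        intro p hp
        rcases prefix_concat_cases hp with hp | rfl
        · exact hc p hp
        · have hcs : (0:ℤ) ≤ c.sum := hc c (List.prefix_refl c)
          simp; omega
    · -- s = 0
      have hts : 1 ≤ t.sum := by omega
      obtain ⟨a, c, heq, ha, hc⟩ := ih ht hts
      refine ⟨a, c ++ [0], by simp [heq], ha, ?_⟩
      intro p hp
      rcases prefix_concat_cases hp with hp | rfl
      · exact hc p hp
      · have hcs : (0:ℤ) ≤ c.sum := hc c (List.prefix_refl c)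
        simp; omega
    · -- s = -1
      have hts : 1 ≤ t.sum := by omega
      obtain ⟨a, c, heq, ha, hc⟩ := ih ht hts
      -- c.sum = t.sum - 1 ≥ 1
      have hcsum : a.sum + (1 + c.sum) = t.sum := by
        rw [heq]; simp
      refine ⟨a, c ++ [-1], by simp [heq], ha, ?_⟩
      intro p hp
      rcases prefix_concat_cases hp with hp | rfl
      · exact hc p hp
      · simp; omega

lemma not_lt_decomp {a c a' c' : List ℤ} (h : a ++ 1 :: c = a' ++ 1 :: c')
    (ha : a.sum = 0) (ha' : a'.sum = 0)
    (hc : ∀ p : List ℤ, p <+: c → 0 ≤ p.sum)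
    (hlen : a.length < a'.length) : False := by
  have h1 : a ++ [1] <+: a' ++ 1 :: c' := by
    rw [← h]
    exact (List.prefix_append_right_inj a).2 ⟨c, rfl⟩
  have h2 : a ++ [1] <+: a' :=
    List.prefix_of_prefix_length_le h1 (a'.prefix_append _) (by simp; omega)
  obtain ⟨d, hd⟩ := h2
  have hc2 : c = d ++ 1 :: c' := by
    rw [← hd] at h
    apply List.append_cancel_left (as := a ++ [1])
    simpa using h
  have hdp : d <+: c := hc2 ▸ ⟨1 :: c', rfl⟩
  have hds : (0:ℤ) ≤ d.sum := hc d hdp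
  have : a.sum + (1 + d.sum) = a'.sum := by rw [← hd]; simp
  omega

lemma decomp_unique {a c a' c' : List ℤ} (h : a ++ 1 :: c = a' ++ 1 :: c')
    (ha : a.sum = 0) (ha' : a'.sum = 0)
    (hc : ∀ p : List ℤ, p <+: c → 0 ≤ p.sum)
    (hc' : ∀ p : List ℤ, p <+: c' → 0 ≤ p.sum) :
    a = a' ∧ c = c' := by
  have hlen : a.length = a'.length := by
    rcases lt_trichotomy a.length a'.length with hl | hl | hl
    · exact absurd (not_lt_decomp h ha ha' hc hl) (by simp)
    · exact hl
    · exact absurd (not_lt_decomp h.symm ha' ha hc' hl) (by simp)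
  obtain ⟨h1, h2⟩ := List.append_inj h hlen
  exact ⟨h1, by simpa using h2⟩

lemma nat_card_sigma {ι : Type*} [Fintype ι] (f : ι → Type*) [∀ i, Finite (f i)] :
    Nat.card (Σ i, f i) = ∑ i, Nat.card (f i) := by
  letI : ∀ i, Fintype (f i) := fun i => Fintype.ofFinite _
  simp [Nat.card_eq_fintype_card]

end MotzkinAux

open MotzkinAux in
set_option maxHeartbeats 1000000 in
/-- **Decomposition of Motzkin paths from `0` to `+1`:**
`B⁽⁺¹⁾_{ℓ,m} = Σ_{ℓ₁+ℓ₂=ℓ, m₁+m₂=m} E_{ℓ₁,m₁}·B_{ℓ₂,m₂}`, i.e. `B⁽⁺¹⁾ = E·B` as formal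
power series. -/
theorem pathPlus_decomposition (ℓ m : ℕ) :
    pathPlusCount ℓ m =
      ∑ p ∈ Finset.HasAntidiagonal.antidiagonal ℓ, ∑ q ∈ Finset.HasAntidiagonal.antidiagonal m,
        excursionCount p.1 q.1 * bridgeCount p.2 q.2 := by
  classical
  set s := Finset.HasAntidiagonal.antidiagonal ℓ ×ˢ Finset.HasAntidiagonal.antidiagonal m with hs
  let Fib : (ℕ × ℕ) × (ℕ × ℕ) → Type := fun x =>
    {w : List ℤ // IsMotzkinWalk w ∧ w.sum = 0 ∧
      (∀ p : List ℤ, p <+: w → 0 ≤ p.sum) ∧ w.count 0 = x.1.1 ∧ w.count (-1) = x.2.1} ×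
    {w : List ℤ // IsMotzkinWalk w ∧ w.sum = 0 ∧
      w.count 0 = x.1.2 ∧ w.count (-1) = x.2.2}
  haveI : ∀ x : s, Finite (Fib x.1) := fun x => by
    dsimp [Fib]; infer_instance
  let g : (Σ x : s, Fib x.1) → {w : List ℤ // IsMotzkinWalk w ∧ w.sum = 1 ∧
      w.count 0 = ℓ ∧ w.count (-1) = m} := by
    rintro ⟨⟨x, hx⟩, ⟨c, hcw, hcs, hcp, hc0, hc1⟩, ⟨a, haw, has, ha0, ha1⟩⟩
    simp only [hs, Finset.mem_product, Finset.HasAntidiagonal.mem_antidiagonal] at hx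
    refine ⟨a ++ 1 :: c, ?_, ?_, ?_, ?_⟩
    · intro t ht
      rcases List.mem_append.1 ht with ht | ht
      · exact haw t ht
      · rcases List.mem_cons.1 ht with rfl | ht
        · exact Or.inl rfl
        · exact hcw t ht
    · simp [has, hcs]
    · rw [List.count_append, List.count_cons]
      simp only [ha0, hc0]
      norm_num
      omega
    · rw [List.count_append, List.count_cons]
      simp only [ha1, hc1]
      norm_num
      omega
  have hginj : Function.Injective g := by
    rintro ⟨⟨x, hx⟩, ⟨c, hcw, hcs, hcp, hc0, hc1⟩, ⟨a, haw, has, ha0, ha1⟩⟩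
           ⟨⟨x', hx'⟩, ⟨c', hcw', hcs', hcp', hc0', hc1'⟩, ⟨a', haw', has', ha0', ha1'⟩⟩ hgg
    have heq : a ++ 1 :: c = a' ++ 1 :: c' := congrArg Subtype.val hgg
    obtain ⟨rfl, rfl⟩ := decomp_unique heq has has' hcp hcp'
    have hxx : x = x' := by
      have e1 : x.1.1 = x'.1.1 := by rw [← hc0, ← hc0']
      have e2 : x.2.1 = x'.2.1 := by rw [← hc1, ← hc1']
      have e3 : x.1.2 = x'.1.2 := by rw [← ha0, ← ha0']
      have e4 : x.2.2 = x'.2.2 := by rw [← ha1, ← ha1']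
      ext <;> assumption
    subst hxx
    rfl
  have hgsurj : Function.Surjective g := by
    rintro ⟨w, hw, hsum, h0, h1⟩
    obtain ⟨a, c, rfl, has, hcp⟩ := exists_decomp hw (by omega)
    have haw : IsMotzkinWalk a := fun t ht => hw t (by simp [ht])
    have hcw : IsMotzkinWalk c := fun t ht => hw t (by simp [ht])
    have hcs : c.sum = 0 := by
      have : a.sum + (1 + c.sum) = 1 := by simpa using hsum
      omega
    have hc0 : a.count 0 + c.count 0 = ℓ := by
      rw [← h0, List.count_append, List.count_cons]
      norm_num
    have hc1 : a.count (-1) + c.count (-1) = m := by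
      rw [← h1, List.count_append, List.count_cons]
      norm_num
    refine ⟨⟨⟨((c.count 0, a.count 0), (c.count (-1), a.count (-1))), ?_⟩,
      ⟨c, hcw, hcs, hcp, rfl, rfl⟩, ⟨a, haw, has, rfl, rfl⟩⟩, rfl⟩
    simp only [hs, Finset.mem_product, Finset.HasAntidiagonal.mem_antidiagonal]
    omega
  have hcard : pathPlusCount ℓ m = Nat.card (Σ x : s, Fib x.1) :=
    (Nat.card_eq_of_bijective g ⟨hginj, hgsurj⟩).symm
  rw [hcard, nat_card_sigma]
  calc (∑ x : s, Nat.card (Fib x.1))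
      = ∑ x ∈ s, Nat.card (Fib x) := Finset.sum_coe_sort s (fun x => Nat.card (Fib x))
    _ = ∑ p ∈ Finset.HasAntidiagonal.antidiagonal ℓ, ∑ q ∈ Finset.HasAntidiagonal.antidiagonal m, Nat.card (Fib (p, q)) := by
        rw [hs]; exact Finset.sum_product _ _ _
    _ = ∑ p ∈ Finset.HasAntidiagonal.antidiagonal ℓ, ∑ q ∈ Finset.HasAntidiagonal.antidiagonal m,
          excursionCount p.1 q.1 * bridgeCount p.2 q.2 := by
        refine Finset.sum_congr rfl fun p _ => Finset.sum_congr rfl fun q _ => ?_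
        rw [excursionCount, bridgeCount, ← Nat.card_prod]
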